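/- The minimal cardinality of a γ-family which is not semi τ-diagonalizable is equal to the bounding number 𝔟. -/

import Mathlib

open Set Filter Cardinal
open scoped Classical

noncomputable section

/-- The Cantor space `2^ℕ`. -/
abbrev Cantor := ℕ → Bool

/-- Arrays: elements of `2^(ℕ×ℕ)`. -/
abbrev Arr := ℕ × ℕ → Bool

/-- A γ-array: every row is eventually 1. -/
def IsGammaArray (A : Arr) : Prop := ∀ n, ∀ᶠ m in atTop, A (n, m) = true

/-- A γ-family: a set of γ-arrays. -/
def GammaFamily (𝒜 : Set Arr) : Prop := ∀ A ∈ 𝒜, IsGammaArray A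

/-- A family of arrays is finitely τ-diagonalizable. -/
def FinTauDiag (𝒜 : Set Arr) : Prop :=
  ∃ F : ℕ → Finset ℕ,
    (∀ A ∈ 𝒜, ∃ᶠ n in atTop, ∃ m ∈ F n, A (n, m) = true) ∧
    (∀ A ∈ 𝒜, ∀ B ∈ 𝒜,
      (∀ᶠ n in atTop, ∀ m ∈ F n, A (n, m) ≤ B (n, m)) ∨
      (∀ᶠ n in atTop, ∀ m ∈ F n, B (n, m) ≤ A (n, m)))

/-- A family of arrays is semi τ-diagonalizable (via a partial function with domain `D`). -/
def SemiTauDiag (𝒜 : Set Arr) : Prop :=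
  ∃ (D : Set ℕ) (g : ℕ → ℕ),
    (∀ A ∈ 𝒜, ∃ᶠ n in atTop, n ∈ D ∧ A (n, g n) = true) ∧
    (∀ A ∈ 𝒜, ∀ B ∈ 𝒜,
      (∀ᶠ n in atTop, n ∈ D → A (n, g n) ≤ B (n, g n)) ∨
      (∀ᶠ n in atTop, n ∈ D → B (n, g n) ≤ A (n, g n)))

/-- A τ-family of arrays. -/
def TauFamily (𝒜 : Set Arr) : Prop :=
  (∀ A ∈ 𝒜, ∀ n, ∃ᶠ m in atTop, A (n, m) = true) ∧
  (∀ A ∈ 𝒜, ∀ B ∈ 𝒜, ∀ n,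
    (∀ᶠ m in atTop, A (n, m) ≤ B (n, m)) ∨
    (∀ᶠ m in atTop, B (n, m) ≤ A (n, m)))

/-- A family of arrays is τ-diagonalizable. -/
def TauDiag (𝒜 : Set Arr) : Prop :=
  ∃ g : ℕ → ℕ,
    (∀ A ∈ 𝒜, ∃ᶠ n in atTop, A (n, g n) = true) ∧
    (∀ A ∈ 𝒜, ∀ B ∈ 𝒜,
      (∀ᶠ n in atTop, A (n, g n) ≤ B (n, g n)) ∨
      (∀ᶠ n in atTop, B (n, g n) ≤ A (n, g n)))

/-- A family of arrays is o-diagonalizable. -/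
def ODiag (𝒜 : Set Arr) : Prop :=
  ∃ g : ℕ → ℕ, ∀ A ∈ 𝒜, ∃ n, A (n, g n) = true

/-- An ω-family of arrays: rows frequently 1 and, for each `n`,
the family of the `n`-th rows is centered. -/
def OmegaFamily (𝒜 : Set Arr) : Prop :=
  (∀ A ∈ 𝒜, ∀ n, ∃ᶠ m in atTop, A (n, m) = true) ∧
  (∀ n, ∀ 𝒜' ⊆ 𝒜, 𝒜'.Finite → {m | ∀ A ∈ 𝒜', A (n, m) = true}.Infinite)

/-- The bounding number 𝔟. -/
def bNum : Cardinal :=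
  sInf {c | ∃ F : Set (ℕ → ℕ), Cardinal.mk F = c ∧
    ¬ ∃ g : ℕ → ℕ, ∀ f ∈ F, ∀ᶠ n in atTop, f n ≤ g n}

/-- The splitting number 𝔰. -/
def sNum : Cardinal :=
  sInf {c | ∃ S : Set (Set ℕ), Cardinal.mk S = c ∧ (∀ s ∈ S, s.Infinite) ∧
    ∀ a : Set ℕ, a.Infinite → ∃ s ∈ S, (a ∩ s).Infinite ∧ (a \ s).Infinite}

/-- The tower number 𝔱. -/
def tNum : Cardinal :=
  sInf {c | ∃ T : Set (Set ℕ), Cardinal.mk T = c ∧ (∀ t ∈ T, t.Infinite) ∧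
    (∀ a ∈ T, ∀ b ∈ T, (a \ b).Finite ∨ (b \ a).Finite) ∧
    ¬ ∃ a : Set ℕ, a.Infinite ∧ ∀ t ∈ T, (a \ t).Finite}

/-- cov(M): the least number of meager sets covering the Baire space. -/
def covM : Cardinal :=
  sInf {c | ∃ 𝒞 : Set (Set (ℕ → ℕ)), Cardinal.mk 𝒞 = c ∧
    (∀ M ∈ 𝒞, IsMeagre M) ∧ ⋃₀ 𝒞 = Set.univ}

/-- The o-diagonalization number: the minimal cardinality of a τ-family
which is not o-diagonalizable. -/
def odNum : Cardinal :=
  sInf {c | ∃ 𝒜 : Set Arr, Cardinal.mk 𝒜 = c ∧ TauFamily 𝒜 ∧ ¬ ODiag 𝒜}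

section Covers

variable (α : Type*)

/-- A countable cover of the space `α`. -/
def CountCover (𝒰 : Set (Set α)) : Prop :=
  𝒰.Countable ∧ ⋃₀ 𝒰 = Set.univ ∧ Set.univ ∉ 𝒰

/-- A (countable) γ-cover. -/
def GammaCover (𝒰 : Set (Set α)) : Prop :=
  CountCover α 𝒰 ∧ 𝒰.Infinite ∧ ∀ x : α, {U | U ∈ 𝒰 ∧ x ∉ U}.Finite

/-- A (countable) τ-cover. -/
def TauCover (𝒰 : Set (Set α)) : Prop :=
  CountCover α 𝒰 ∧ (∀ x : α, {U | U ∈ 𝒰 ∧ x ∈ U}.Infinite) ∧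
  ∀ x y : α, {U | U ∈ 𝒰 ∧ x ∈ U ∧ y ∉ U}.Finite ∨ {U | U ∈ 𝒰 ∧ y ∈ U ∧ x ∉ U}.Finite

/-- A (countable) ω-cover. -/
def OmegaCover (𝒰 : Set (Set α)) : Prop :=
  CountCover α 𝒰 ∧ ∀ F : Set α, F.Finite → ∃ U ∈ 𝒰, F ⊆ U

variable [TopologicalSpace α]

/-- All members are open. -/
def OpenFam (𝒰 : Set (Set α)) : Prop := ∀ U ∈ 𝒰, IsOpen U

/-- All members are clopen. -/
def ClopenFam (𝒰 : Set (Set α)) : Prop := ∀ U ∈ 𝒰, IsClopen U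

/-- The class O of countable open covers. -/
def OCov (𝒰 : Set (Set α)) : Prop := CountCover α 𝒰 ∧ OpenFam α 𝒰
/-- The class Γ of countable open γ-covers. -/
def OGamma (𝒰 : Set (Set α)) : Prop := GammaCover α 𝒰 ∧ OpenFam α 𝒰
/-- The class Τ of countable open τ-covers. -/
def OTau (𝒰 : Set (Set α)) : Prop := TauCover α 𝒰 ∧ OpenFam α 𝒰
/-- The class Ω of countable open ω-covers. -/
def OOmega (𝒰 : Set (Set α)) : Prop := OmegaCover α 𝒰 ∧ OpenFam α 𝒰

/-- The class C of countable clopen covers. -/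
def KCov (𝒰 : Set (Set α)) : Prop := CountCover α 𝒰 ∧ ClopenFam α 𝒰
/-- The class C_Γ of countable clopen γ-covers. -/
def KGamma (𝒰 : Set (Set α)) : Prop := GammaCover α 𝒰 ∧ ClopenFam α 𝒰
/-- The class C_Τ of countable clopen τ-covers. -/
def KTau (𝒰 : Set (Set α)) : Prop := TauCover α 𝒰 ∧ ClopenFam α 𝒰

end Covers

/-- The selection principle S1(𝒜,ℬ). -/
def S1 (α : Type*) (𝒜 ℬ : Set (Set α) → Prop) : Prop :=
  ∀ U : ℕ → Set (Set α), (∀ n, 𝒜 (U n)) →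
    ∃ V : ℕ → Set α, (∀ n, V n ∈ U n) ∧ ℬ (range V)

/-- The selection principle Sfin(𝒜,ℬ). -/
def SFin (α : Type*) (𝒜 ℬ : Set (Set α) → Prop) : Prop :=
  ∀ U : ℕ → Set (Set α), (∀ n, 𝒜 (U n)) →
    ∃ F : ℕ → Set (Set α), (∀ n, (F n).Finite ∧ F n ⊆ U n) ∧ ℬ (⋃ n, F n)

/-- The selection principle Ufin(𝒜,ℬ). -/
def UFin (α : Type*) (𝒜 ℬ : Set (Set α) → Prop) : Prop :=
  ∀ U : ℕ → Set (Set α), (∀ n, 𝒜 (U n)) →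
    (∀ n, ¬ ∃ F : Set (Set α), F ⊆ U n ∧ F.Finite ∧ ⋃₀ F = Set.univ) →
    ∃ F : ℕ → Set (Set α), (∀ n, (F n).Finite ∧ F n ⊆ U n) ∧
      ℬ (range fun n => ⋃₀ F n)

/-- The critical cardinality non(P) of a property `P` of sets of reals:
the minimal cardinality of an infinite subset of the Cantor space not satisfying `P`. -/
def nonP (P : Set Cantor → Prop) : Cardinal :=
  sInf {c | ∃ X : Set Cantor, X.Infinite ∧ ¬ P X ∧ Cardinal.mk X = c}

/-- The collection of cardinalities of witnessing families of `f`-sequences for `θ_f`. -/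
def ThetaSet (f : ℕ → ℕ) : Set Cardinal :=
  {c | ∃ ℱ : Set (ℕ → Set ℕ), Cardinal.mk ℱ = c ∧
    (∀ σ ∈ ℱ, ∀ n, σ n ⊆ Iio (f n)) ∧
    (∀ σ ∈ ℱ, ∀ᶠ n in atTop, (σ n).Nonempty) ∧
    (∀ σ ∈ ℱ, ∀ η ∈ ℱ, (∀ᶠ n in atTop, σ n ⊆ η n) ∨ (∀ᶠ n in atTop, η n ⊆ σ n)) ∧
    ¬ ∃ g : ℕ → ℕ, ∀ σ ∈ ℱ, ∃ n, g n ∈ σ n}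

/-- The cardinal θ_f; equal to 𝔠⁺ if no witnessing family exists. -/
def theta (f : ℕ → ℕ) : Cardinal :=
  if (ThetaSet f).Nonempty then sInf (ThetaSet f) else Order.succ Cardinal.continuum

/-- θ* = min over f (with all values ≥ 2) of θ_f. -/
def thetaStar : Cardinal :=
  sInf {c | ∃ f : ℕ → ℕ, (∀ n, 2 ≤ f n) ∧ theta f = c}

/-- The collection of cardinalities of witnessing families for `𝔈_f`. -/
def ESet (f : ℕ → ℕ) : Set Cardinal :=
  {c | ∃ F : Set (ℕ → ℕ), Cardinal.mk F = c ∧ (∀ h ∈ F, ∀ n, h n < f n) ∧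
    ∀ g : ℕ → ℕ, ∃ h ∈ F, ∀ n, h n ≠ g n}

/-- The cardinal 𝔈_f; equal to 𝔠⁺ if no witnessing family exists. -/
def ENum (f : ℕ → ℕ) : Cardinal :=
  if (ESet f).Nonempty then sInf (ESet f) else Order.succ Cardinal.continuum

/-- 𝔈* = min over f (with all values ≥ 1) of 𝔈_f. -/
def EStar : Cardinal :=
  sInf {c | ∃ f : ℕ → ℕ, (∀ n, 1 ≤ f n) ∧ ENum f = c}



/-! ### Auxiliary material for `stmt1` -/

section Stmt1Aux

/-- The monotone envelope of a function. -/
private def env (h : ℕ → ℕ) : ℕ → ℕ := fun n => (Finset.range (n+1)).sup h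

private lemma env_mono (h : ℕ → ℕ) : Monotone (env h) := by
  intro a b hab
  exact Finset.sup_mono (Finset.range_subset_range.mpr (by omega))

private lemma le_env (h : ℕ → ℕ) (n : ℕ) : h n ≤ env h n :=
  Finset.le_sup (Finset.self_mem_range_succ n)

/-- Threshold array associated to a function. -/
private def tArr (h : ℕ → ℕ) : Arr := fun p => decide (env h p.1 ≤ p.2)

/-- Window array associated to a pair of functions. -/
private def wArr (x y : ℕ → ℕ) : Arr := fun p => !decide (env x p.1 ≤ p.2 ∧ p.2 < env y p.1)

private lemma tArr_eq_true {h : ℕ → ℕ} {n m : ℕ} : tArr h (n, m) = true ↔ env h n ≤ m := by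
  simp [tArr]

private lemma wArr_eq_false {x y : ℕ → ℕ} {n m : ℕ} :
    wArr x y (n, m) = false ↔ (env x n ≤ m ∧ m < env y n) := by
  simp [wArr]

private lemma wArr_eq_true {x y : ℕ → ℕ} {n m : ℕ} :
    wArr x y (n, m) = true ↔ ¬ (env x n ≤ m ∧ m < env y n) := by
  simp only [wArr]
  simp only [Bool.not_eq_true', decide_eq_false_iff_not]

/-- The set whose infimum defines `bNum` is nonempty. -/
private lemma bNumSet_nonempty :
    {c | ∃ F : Set (ℕ → ℕ), Cardinal.mk F = c ∧
      ¬ ∃ g : ℕ → ℕ, ∀ f ∈ F, ∀ᶠ n in atTop, f n ≤ g n}.Nonempty := by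
  refine ⟨_, Set.univ, rfl, ?_⟩
  rintro ⟨g, hg⟩
  obtain ⟨n, hn⟩ := (hg (fun n => g n + 1) (Set.mem_univ _)).exists
  omega

/-- Every unbounded family of functions is infinite, hence `ℵ₀ ≤ 𝔟`. -/
private lemma aleph0_le_bNum : ℵ₀ ≤ bNum := by
  refine le_csInf bNumSet_nonempty ?_
  rintro c ⟨F, rfl, hF⟩
  by_contra hlt
  push_neg at hlt
  have hfin : F.Finite := by
    rw [← Cardinal.lt_aleph0_iff_set_finite]
    exact hlt
  apply hF
  refine ⟨fun n => hfin.toFinset.sup (fun f => f n), ?_⟩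
  intro f hf
  refine Filter.Eventually.of_forall (fun n => ?_)
  exact Finset.le_sup (f := fun f => f n) (hfin.mem_toFinset.mpr hf)

/-- Any γ-family which is not semi τ-diagonalizable has cardinality at least `bNum`. -/
private lemma bNum_le_of_not_semi (𝒜 : Set Arr) (hγ : GammaFamily 𝒜)
    (hns : ¬ SemiTauDiag 𝒜) : bNum ≤ Cardinal.mk 𝒜 := by
  have hv : ∀ A : 𝒜, ∃ v : ℕ → ℕ, ∀ n, ∀ m, v n ≤ m → A.1 (n, m) = true := by
    intro A
    choose v hvspec using fun n => (Filter.eventually_atTop.mp (hγ A.1 A.2 n))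
    exact ⟨v, hvspec⟩
  choose v hvspec using hv
  have hunb : ¬ ∃ g : ℕ → ℕ, ∀ f ∈ Set.range v, ∀ᶠ n in atTop, f n ≤ g n := by
    rintro ⟨g, hg⟩
    apply hns
    refine ⟨Set.univ, g, ?_, ?_⟩
    · intro A hA
      have h1 : ∀ᶠ n in atTop, A (n, g n) = true :=
        (hg (v ⟨A, hA⟩) ⟨⟨A, hA⟩, rfl⟩).mono
          (fun n hn => hvspec ⟨A, hA⟩ n (g n) hn)
      exact (h1.mono (fun n hn => ⟨trivial, hn⟩)).frequently
    · intro A hA B hB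
      left
      have h1 : ∀ᶠ n in atTop, B (n, g n) = true :=
        (hg (v ⟨B, hB⟩) ⟨⟨B, hB⟩, rfl⟩).mono
          (fun n hn => hvspec ⟨B, hB⟩ n (g n) hn)
      exact h1.mono (fun n hn _ => by rw [hn]; exact Bool.le_true _)
  have h1 : bNum ≤ Cardinal.mk (Set.range v) := csInf_le' ⟨Set.range v, rfl, hunb⟩
  exact h1.trans Cardinal.mk_range_le

/-- There is a γ-family of cardinality `bNum` which is not semi τ-diagonalizable. -/
private lemma exists_bad_family :
    ∃ 𝒜 : Set Arr, Cardinal.mk 𝒜 = bNum ∧ GammaFamily 𝒜 ∧ ¬ SemiTauDiag 𝒜 := by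
  obtain ⟨F₀, hmk, hunb⟩ :
      ∃ F : Set (ℕ → ℕ), Cardinal.mk F = bNum ∧
        ¬ ∃ g : ℕ → ℕ, ∀ f ∈ F, ∀ᶠ n in atTop, f n ≤ g n :=
    csInf_mem bNumSet_nonempty
  set 𝒜 : Set Arr :=
    (tArr '' F₀) ∪ ((fun q : (ℕ → ℕ) × (ℕ → ℕ) => wArr q.1 q.2) '' (F₀ ×ˢ F₀)) with h𝒜
  have htmem : ∀ x ∈ F₀, tArr x ∈ 𝒜 := fun x hx => Or.inl ⟨x, hx, rfl⟩
  have hwmem : ∀ x ∈ F₀, ∀ y ∈ F₀, wArr x y ∈ 𝒜 :=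
    fun x hx y hy => Or.inr ⟨(x, y), ⟨hx, hy⟩, rfl⟩
  have hγ : GammaFamily 𝒜 := by
    rintro A (⟨x, hx, rfl⟩ | ⟨q, hq, rfl⟩) <;> intro n
    · exact Filter.eventually_atTop.mpr
        ⟨env x n, fun m hm => tArr_eq_true.mpr hm⟩
    · refine Filter.eventually_atTop.mpr ⟨env q.2 n, fun m hm => ?_⟩
      exact wArr_eq_true.mpr (fun hc => absurd hc.2 (not_lt.mpr hm))
  have hns : ¬ SemiTauDiag 𝒜 := by
    rintro ⟨D, g, ha, hb⟩
    -- the landing sets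
    set s : (ℕ → ℕ) → (ℕ → ℕ) → Set ℕ :=
      fun x y => {n | n ∈ D ∧ env x n ≤ g n ∧ g n < env y n} with hs
    -- Key step: there is ρ ∈ F₀ such that all landing sets s ρ σ are finite.
    have key : ∃ ρ ∈ F₀, ∀ σ ∈ F₀, (s ρ σ).Finite := by
      by_cases hc : ∃ x ∈ F₀, ∃ y ∈ F₀, (s x y).Infinite
      · obtain ⟨x, hx, y, hy, hxy⟩ := hc
        refine ⟨y, hy, fun σ hσ => ?_⟩
        by_contra hinf
        rw [← Set.not_infinite, not_not] at hinf
        rcases hb (wArr x y) (hwmem x hx y hy) (wArr y σ) (hwmem y hy σ hσ) with hcase | hcase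
        · obtain ⟨n, hn1, hn2⟩ :=
            ((Nat.frequently_atTop_iff_infinite.mpr hinf).and_eventually hcase).exists
          obtain ⟨hnD, hge, hlt⟩ := hn1
          have hv2 : wArr y σ (n, g n) = false := wArr_eq_false.mpr ⟨hge, hlt⟩
          have hv1 : wArr x y (n, g n) = true :=
            wArr_eq_true.mpr (fun hcontra => absurd hcontra.2 (not_lt.mpr hge))
          have hle := hn2 hnD
          rw [hv1, hv2] at hle
          exact absurd hle (by simp)
        · obtain ⟨n, hn1, hn2⟩ :=
            ((Nat.frequently_atTop_iff_infinite.mpr hxy).and_eventually hcase).exists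
          obtain ⟨hnD, hge, hlt⟩ := hn1
          have hv1 : wArr x y (n, g n) = false := wArr_eq_false.mpr ⟨hge, hlt⟩
          have hv2 : wArr y σ (n, g n) = true :=
            wArr_eq_true.mpr (fun hcontra => absurd hlt (not_lt.mpr hcontra.1))
          have hle := hn2 hnD
          rw [hv1, hv2] at hle
          exact absurd hle (by simp)
      · push_neg at hc
        have hne : F₀.Nonempty := by
          by_contra hemp
          rw [Set.not_nonempty_iff_eq_empty] at hemp
          exact hunb ⟨id, by simp [hemp]⟩
        obtain ⟨h0, hh0⟩ := hne
        exact ⟨h0, hh0, fun σ hσ => hc h0 hh0 σ hσ⟩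
    obtain ⟨ρ, hρF, hρ⟩ := key
    -- the set of n where g n exceeds the ρ-threshold is infinite
    have hTinf : {n | n ∈ D ∧ env ρ n ≤ g n}.Infinite := by
      apply Nat.frequently_atTop_iff_infinite.mp
      refine (ha (tArr ρ) (htmem ρ hρF)).mono ?_
      rintro n ⟨h1, h2⟩
      exact ⟨h1, tArr_eq_true.mp h2⟩
    set T := {n | n ∈ D ∧ env ρ n ≤ g n} with hT
    have hnext : ∀ k : ℕ, ∃ n, n ∈ T ∧ k ≤ n := by
      intro k
      obtain ⟨n, hn, hk⟩ := hTinf.exists_gt k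
      exact ⟨n, hn, le_of_lt hk⟩
    set nxt : ℕ → ℕ := fun k => sInf {n | n ∈ T ∧ k ≤ n} with hnxtdef
    have hnxt : ∀ k, nxt k ∈ T ∧ k ≤ nxt k := fun k => Nat.sInf_mem (hnext k)
    -- this yields a bound for F₀, a contradiction
    refine hunb ⟨fun k => g (nxt k), ?_⟩
    intro h hh
    obtain ⟨N, hN⟩ := (hρ h hh).bddAbove
    refine Filter.eventually_atTop.mpr ⟨N + 1, fun k hk => ?_⟩
    have h2 : env h (nxt k) ≤ g (nxt k) := by
      by_contra hlt
      push_neg at hlt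
      have hmem : nxt k ∈ s ρ h := ⟨(hnxt k).1.1, (hnxt k).1.2, hlt⟩
      have hb1 : nxt k ≤ N := hN hmem
      have hb2 : k ≤ nxt k := (hnxt k).2
      omega
    calc h k ≤ env h k := le_env h k
      _ ≤ env h (nxt k) := env_mono h (hnxt k).2
      _ ≤ g (nxt k) := h2
  have hcard : Cardinal.mk 𝒜 = bNum := by
    refine le_antisymm ?_ (bNum_le_of_not_semi 𝒜 hγ hns)
    have h0 : ℵ₀ ≤ bNum := aleph0_le_bNum
    have hle1 : Cardinal.mk (tArr '' F₀) ≤ bNum := by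
      rw [← hmk]; exact Cardinal.mk_image_le
    have hle2 :
        Cardinal.mk ((fun q : (ℕ → ℕ) × (ℕ → ℕ) => wArr q.1 q.2) '' (F₀ ×ˢ F₀)) ≤ bNum := by
      refine le_trans Cardinal.mk_image_le ?_
      have hprod : Cardinal.mk (F₀ ×ˢ F₀ : Set ((ℕ → ℕ) × (ℕ → ℕ))) = bNum * bNum := by
        rw [Cardinal.mk_congr (Equiv.Set.prod F₀ F₀)]
        simp [Cardinal.mk_prod, hmk]
      rw [hprod, Cardinal.mul_eq_self h0]
    calc Cardinal.mk 𝒜 ≤ _ + _ := Cardinal.mk_union_le _ _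
      _ ≤ bNum + bNum := add_le_add hle1 hle2
      _ = bNum := Cardinal.add_eq_self h0
  exact ⟨𝒜, hcard, hγ, hns⟩

end Stmt1Aux

/-- The minimal cardinality of a γ-family which is not semi τ-diagonalizable
is equal to the bounding number 𝔟. -/
theorem stmt1 :
    sInf {c | ∃ 𝒜 : Set Arr, Cardinal.mk 𝒜 = c ∧ GammaFamily 𝒜 ∧ ¬ SemiTauDiag 𝒜} = bNum := by
  obtain ⟨𝒜, hmk, hγ, hns⟩ := exists_bad_family
  apply le_antisymm
  · exact csInf_le' ⟨𝒜, hmk, hγ, hns⟩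
  · refine le_csInf ⟨bNum, 𝒜, hmk, hγ, hns⟩ ?_
    rintro c ⟨ℬ, rfl, hγ', hns'⟩
    exact bNum_le_of_not_semi ℬ hγ' hns'

end
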